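/- Let C ∈ ℝ^{s×n}, P = I - C†C, and Q = A^T J A be symmetric positive definite. Then P(I - (PQP)†QP) = 0. -/

import Mathlib

open Matrix

/-- `Cd` is the Moore–Penrose inverse of `C` (the four Penrose equations). -/
def IsMoorePenrose {m n : Type*} [Fintype m] [Fintype n]
    (C : Matrix m n ℝ) (Cd : Matrix n m ℝ) : Prop :=
  C * Cd * C = C ∧ Cd * C * Cd = Cd ∧ (C * Cd)ᵀ = C * Cd ∧ (Cd * C)ᵀ = Cd * C

/-- The signature matrix `J = diag(I_p, -I_q)`. -/
def sig (p q : ℕ) : Matrix (Fin p ⊕ Fin q) (Fin p ⊕ Fin q) ℝ :=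
  Matrix.fromBlocks 1 0 0 (-1)

/-- Uniqueness of the Moore–Penrose inverse. -/
lemma mp_unique {m n : Type*} [Fintype m] [Fintype n]
    (C : Matrix m n ℝ) (X Y : Matrix n m ℝ)
    (hX : IsMoorePenrose C X) (hY : IsMoorePenrose C Y) : X = Y := by
  obtain ⟨hX1, hX2, hX3, hX4⟩ := hX
  obtain ⟨hY1, hY2, hY3, hY4⟩ := hY
  have hCt1 : Cᵀ = Cᵀ * C * Y := by
    calc Cᵀ = (C * Y * C)ᵀ := by rw [hY1]
    _ = Cᵀ * (C * Y)ᵀ := by rw [transpose_mul]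
    _ = Cᵀ * (C * Y) := by rw [hY3]
    _ = Cᵀ * C * Y := by simp only [Matrix.mul_assoc]
  have hCt2 : Cᵀ = X * C * Cᵀ := by
    calc Cᵀ = (C * X * C)ᵀ := by rw [hX1]
    _ = (X * C)ᵀ * Cᵀ := by simp only [transpose_mul, Matrix.mul_assoc]
    _ = X * C * Cᵀ := by rw [hX4]
  have h1 : X = X * C * Y := by
    calc X = X * C * X := hX2.symm
    _ = X * (C * X)ᵀ := by rw [hX3, Matrix.mul_assoc]
    _ = X * (Xᵀ * Cᵀ) := by rw [transpose_mul]
    _ = X * (Xᵀ * (Cᵀ * C * Y)) := by rw [← hCt1]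
    _ = X * (Xᵀ * Cᵀ) * (C * Y) := by simp only [Matrix.mul_assoc]
    _ = X * (C * X)ᵀ * (C * Y) := by rw [transpose_mul]
    _ = X * (C * X) * (C * Y) := by rw [hX3]
    _ = (X * C * X) * C * Y := by simp only [Matrix.mul_assoc]
    _ = X * C * Y := by rw [hX2]
  have h2 : Y = X * C * Y := by
    calc Y = Y * C * Y := hY2.symm
    _ = (Y * C)ᵀ * Y := by rw [hY4]
    _ = Cᵀ * Yᵀ * Y := by rw [transpose_mul]
    _ = X * C * Cᵀ * Yᵀ * Y := by rw [← hCt2]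
    _ = X * C * (Cᵀ * Yᵀ) * Y := by simp only [Matrix.mul_assoc]
    _ = X * C * (Y * C)ᵀ * Y := by rw [transpose_mul]
    _ = X * C * (Y * C) * Y := by rw [hY4]
    _ = X * C * (Y * C * Y) := by simp only [Matrix.mul_assoc]
    _ = X * C * Y := by rw [hY2]
  rw [h1, ← h2]

lemma aux_key {n : ℕ} (P Q M Md : Matrix (Fin n) (Fin n) ℝ)
    (hP2 : P * P = P) (hPt : Pᵀ = P) (hQt : Qᵀ = Q) (hQ : Q.PosDef)
    (hM : M = P * Q * P) (hMd : IsMoorePenrose M Md) :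
    P * (1 - Md * Q * P) = 0 := by
  obtain ⟨h1, h2, h3, h4⟩ := hMd
  have hMt : Mᵀ = M := by
    rw [hM]; simp only [transpose_mul, hPt, hQt, mul_assoc]
  have hMdt : Mdᵀ = Md := by
    refine mp_unique M Mdᵀ Md ⟨?_, ?_, ?_, ?_⟩ ⟨h1, h2, h3, h4⟩
    · calc M * Mdᵀ * M = (Mᵀ * Md * Mᵀ)ᵀ := by
            simp only [transpose_mul, transpose_transpose, mul_assoc]
      _ = M := by rw [hMt, h1, hMt]
    · calc Mdᵀ * M * Mdᵀ = (Md * Mᵀ * Md)ᵀ := by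
            simp only [transpose_mul, transpose_transpose, mul_assoc]
      _ = Mdᵀ := by rw [hMt, h2]
    · calc (M * Mdᵀ)ᵀ = Md * Mᵀ := by
            simp only [transpose_mul, transpose_transpose]
      _ = Md * M := by rw [hMt]
      _ = (Md * M)ᵀ := by rw [h4]
      _ = Mᵀ * Mdᵀ := by simp only [transpose_mul]
      _ = M * Mdᵀ := by rw [hMt]
    · calc (Mdᵀ * M)ᵀ = Mᵀ * Md := by
            simp only [transpose_mul, transpose_transpose]
      _ = M * Md := by rw [hMt]
      _ = (M * Md)ᵀ := by rw [h3]
      _ = Mdᵀ * Mᵀ := by simp only [transpose_mul]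
      _ = Mdᵀ * M := by rw [hMt]
  have hE : Md * M = M * Md := by
    calc Md * M = (Md * M)ᵀ := h4.symm
    _ = Mᵀ * Mdᵀ := by rw [transpose_mul]
    _ = M * Md := by rw [hMt, hMdt]
  have hMP : M * P = M := by rw [hM]; simp only [mul_assoc, hP2]
  have hPM : P * M = M := by
    rw [hM, ← mul_assoc, ← mul_assoc, hP2]
  have hMdP : Md * P = Md := by
    calc Md * P = (Md * M * Md) * P := by rw [h2]
    _ = Md * (M * Md) * P := by simp only [mul_assoc]
    _ = Md * (Md * M) * P := by rw [hE]
    _ = Md * Md * (M * P) := by simp only [mul_assoc]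
    _ = Md * Md * M := by rw [hMP]
    _ = Md * (Md * M) := by rw [mul_assoc]
    _ = Md * (M * Md) := by rw [hE]
    _ = Md * M * Md := by rw [mul_assoc]
    _ = Md := h2
  have hPMd : P * Md = Md := by
    calc P * Md = P * Mdᵀ := by rw [hMdt]
    _ = (Md * Pᵀ)ᵀ := by rw [transpose_mul, transpose_transpose]
    _ = (Md * P)ᵀ := by rw [hPt]
    _ = Mdᵀ := by rw [hMdP]
    _ = Md := hMdt
  have hMdQP : Md * Q * P = Md * M := by
    calc Md * Q * P = Md * P * (Q * P) := by rw [hMdP]; simp only [mul_assoc]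
    _ = Md * (P * Q * P) := by simp only [mul_assoc]
    _ = Md * M := by rw [← hM]
  have hgoal : P * (1 - Md * Q * P) = P - Md * M := by
    rw [mul_sub, mul_one, hMdQP, ← mul_assoc, hPMd]
  rw [hgoal]
  have hMB : M * (P - Md * M) = 0 := by
    rw [mul_sub, hMP, ← mul_assoc, h1, sub_self]
  have hPB : P * (P - Md * M) = P - Md * M := by
    rw [mul_sub, hP2, ← mul_assoc, hPMd]
  set B : Matrix (Fin n) (Fin n) ℝ := P - Md * M with hBdef
  have hBtP : Bᵀ * P = Bᵀ := by
    calc Bᵀ * P = Bᵀ * Pᵀ := by rw [hPt]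
    _ = (P * B)ᵀ := by rw [transpose_mul]
    _ = Bᵀ := by rw [hPB]
  have hBQB : Bᵀ * Q * B = 0 := by
    calc Bᵀ * Q * B = Bᵀ * Q * (P * B) := by rw [hPB]
    _ = (Bᵀ * P) * (Q * (P * B)) := by rw [hBtP]; simp only [mul_assoc]
    _ = Bᵀ * (P * Q * P * B) := by simp only [mul_assoc]
    _ = Bᵀ * (M * B) := by rw [← hM]
    _ = 0 := by rw [hMB, mul_zero]
  have hQsymm : ∀ i k, Q i k = Q k i := by
    intro i k
    conv_lhs => rw [← hQt]
    rfl
  have hBzero : B = 0 := by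
    ext i j
    simp only [Matrix.zero_apply]
    by_contra hne
    have hvne : (fun k => B k j) ≠ 0 := by
      intro h
      exact hne (congrFun h i)
    have hpos := (Matrix.posDef_iff_dotProduct_mulVec.mp hQ).2 (x := fun k => B k j) hvne
    simp only [star_trivial] at hpos
    have hzero : ((fun k => B k j) ⬝ᵥ Q *ᵥ fun k => B k j) = 0 := by
      have heq : (Bᵀ * Q * B) j j = (fun k => B k j) ⬝ᵥ Q *ᵥ fun k => B k j := by
        simp only [mul_apply, dotProduct, mulVec, transpose_apply, Finset.sum_mul,
          Finset.mul_sum]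
        rw [Finset.sum_comm]
        refine Finset.sum_congr rfl fun x _ => Finset.sum_congr rfl fun y _ => ?_
        ring
      rw [← heq, hBQB, Matrix.zero_apply]
    rw [hzero] at hpos
    exact lt_irrefl 0 hpos
  exact hBzero

/-- With `P = I - C†C`, `Q = AᵀJA` positive definite, `P(I - (PQP)†QP) = 0`. -/
theorem P_mul_one_sub_pinvQP {p q s n : ℕ}
    (A : Matrix (Fin p ⊕ Fin q) (Fin n) ℝ)
    (C : Matrix (Fin s) (Fin n) ℝ) (Cd : Matrix (Fin n) (Fin s) ℝ)
    (hC : IsMoorePenrose C Cd)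
    (hQ : (Aᵀ * sig p q * A).PosDef)
    (Md : Matrix (Fin n) (Fin n) ℝ)
    (hMd : IsMoorePenrose
      ((1 - Cd * C) * (Aᵀ * sig p q * A) * (1 - Cd * C)) Md) :
    (1 - Cd * C) * (1 - Md * (Aᵀ * sig p q * A) * (1 - Cd * C)) = 0 := by
  obtain ⟨hC1, hC2, hC3, hC4⟩ := hC
  have hCdC : Cd * C * (Cd * C) = Cd * C := by
    calc Cd * C * (Cd * C) = (Cd * C * Cd) * C := by simp only [Matrix.mul_assoc]
    _ = Cd * C := by rw [hC2]
  have hP2 : (1 - Cd * C) * (1 - Cd * C) = 1 - Cd * C := by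
    simp only [mul_sub, sub_mul, mul_one, one_mul, hCdC]
    abel
  have hPt : (1 - Cd * C)ᵀ = 1 - Cd * C := by
    rw [transpose_sub, transpose_one, hC4]
  have hQt : (Aᵀ * sig p q * A)ᵀ = Aᵀ * sig p q * A := by
    have hsigt : (sig p q)ᵀ = sig p q := by
      simp [sig, Matrix.fromBlocks_transpose]
    rw [transpose_mul, transpose_mul, transpose_transpose, hsigt, Matrix.mul_assoc]
  exact aux_key (1 - Cd * C) (Aᵀ * sig p q * A)
    ((1 - Cd * C) * (Aᵀ * sig p q * A) * (1 - Cd * C)) Md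
    hP2 hPt hQt hQ rfl hMd
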